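/- (Theorem 2, Uniqueness of the RESUNE.) Suppose φ is differentiable on (0,∞) with φ' > 0 and Ψ is differentiable with Ψ' > 0. Writing ς = ς(P,H(P)) and x(P) = (s* − g·P + k·H(P))/σ, assume that for all P > 0 the direct price effect is negative and dominates the indirect security-feedback effect, i.e., ε·θ_U·ς·P^(−ε−1) + (θ_S·ς − δ)·P^(−2) + (θ_U·P^(−ε) + θ_S·P^(−1))·Ψ'(x(P))·(g/σ) > (θ_U·P^(−ε) + θ_S·P^(−1))·Ψ'(x(P))·(k/σ)·H'(P). Then D_agg is strictly decreasing on (0,∞), and for every Q > 0 there is at most one P* > 0 with D_agg(P*) = Q; hence the RESUNE is unique. -/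

import Mathlib

open Filter

/-- **Theorem 2, Uniqueness of the RESUNE.** Suppose `φ` is differentiable on
`(0,∞)` with `φ' > 0` and `Ψ` is differentiable with `Ψ' > 0`. Writing `ς = ς(P,H(P))` and
`x(P) = (s* − g·P + k·H(P))/σ`, assume that for all `P > 0` the direct price effect is
negative and dominates the indirect security-feedback effect, i.e.
`ε·θ_U·ς·P^(−ε−1) + (θ_S·ς − δ)·P^(−2) + (θ_U·P^(−ε) + θ_S·P^(−1))·Ψ'(x(P))·(g/σ)
  > (θ_U·P^(−ε) + θ_S·P^(−1))·Ψ'(x(P))·(k/σ)·H'(P)`.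
Then `D_agg` is strictly decreasing on `(0,∞)`, and for every `Q > 0` there is at most one
`P* > 0` with `D_agg(P*) = Q`; hence the RESUNE is unique. -/
theorem resune_unique
    (φ : ℝ → ℝ)
    (hφc : ContinuousOn φ (Set.Ici 0))
    (hφm : StrictMonoOn φ (Set.Ici 0))
    (hφ0 : 0 ≤ φ 0)
    (hφtop : Filter.Tendsto (fun H : ℝ => H * φ H) Filter.atTop Filter.atTop)
    (φ' : ℝ → ℝ)
    (hφd : ∀ x : ℝ, 0 < x → HasDerivAt φ (φ' x) x)
    (hφ'pos : ∀ x : ℝ, 0 < x → 0 < φ' x)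
    (B Φ : ℝ) (hB : 0 < B) (hΦ : 0 ≤ Φ)
    (Hs : ℝ → ℝ)
    (hHs : ∀ P : ℝ, 0 < P → 0 < Hs P ∧ Hs P * φ (Hs P) = P * (B + Φ))
    (Hs' : ℝ → ℝ)
    (hHs' : ∀ P : ℝ, 0 < P → HasDerivAt Hs (Hs' P) P)
    (Ψ : ℝ → ℝ)
    (hΨc : Continuous Ψ)
    (hΨm : StrictMono Ψ)
    (hΨ01 : ∀ x : ℝ, 0 < Ψ x ∧ Ψ x < 1)
    (hΨbot : Tendsto Ψ atBot (nhds 0))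
    (hΨtop : Tendsto Ψ atTop (nhds 1))
    (Ψ' : ℝ → ℝ)
    (hΨd : ∀ x : ℝ, HasDerivAt Ψ (Ψ' x) x)
    (hΨ'pos : ∀ x : ℝ, 0 < Ψ' x)
    (g k σ sstar : ℝ) (hg : 0 < g) (hk : 0 < k) (hσ : 0 < σ)
    (θU θS δ e : ℝ) (hθU : 0 < θU) (hθS : 0 < θS) (hδ : 0 ≤ δ) (he : 0 < e)
    (hdom : ∀ P : ℝ, 0 < P →
      e * θU * Ψ ((sstar - g * P + k * Hs P) / σ) * P ^ (-e - 1)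
          + (θS * Ψ ((sstar - g * P + k * Hs P) / σ) - δ) * P ^ (-(2 : ℝ))
          + (θU * P ^ (-e) + θS * P⁻¹) * Ψ' ((sstar - g * P + k * Hs P) / σ) * (g / σ)
        > (θU * P ^ (-e) + θS * P⁻¹) * Ψ' ((sstar - g * P + k * Hs P) / σ) * (k / σ) * Hs' P) :
    StrictAntiOn
      (fun P : ℝ =>
        θU * Ψ ((sstar - g * P + k * Hs P) / σ) * P ^ (-e) +
          (θS * Ψ ((sstar - g * P + k * Hs P) / σ) - δ) * P⁻¹)
      (Set.Ioi 0) ∧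
    (∀ Q : ℝ, 0 < Q → ∀ P₁ H₁ P₂ H₂ : ℝ,
      (0 < P₁ ∧ 0 < H₁ ∧ H₁ * φ H₁ = P₁ * (B + Φ) ∧
        θU * Ψ ((sstar - g * P₁ + k * H₁) / σ) * P₁ ^ (-e) +
          (θS * Ψ ((sstar - g * P₁ + k * H₁) / σ) - δ) * P₁⁻¹ = Q) →
      (0 < P₂ ∧ 0 < H₂ ∧ H₂ * φ H₂ = P₂ * (B + Φ) ∧
        θU * Ψ ((sstar - g * P₂ + k * H₂) / σ) * P₂ ^ (-e) +
          (θS * Ψ ((sstar - g * P₂ + k * H₂) / σ) - δ) * P₂⁻¹ = Q) →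
      P₁ = P₂ ∧ H₁ = H₂) := by
  have key : ∀ P : ℝ, P ∈ Set.Ioi (0:ℝ) → HasDerivAt
      (fun P : ℝ =>
        θU * Ψ ((sstar - g * P + k * Hs P) / σ) * P ^ (-e) +
          (θS * Ψ ((sstar - g * P + k * Hs P) / σ) - δ) * P⁻¹)
      ((θU * (Ψ' ((sstar - g * P + k * Hs P) / σ) * ((-g + k * Hs' P) / σ))) * P ^ (-e)
        + (θU * Ψ ((sstar - g * P + k * Hs P) / σ)) * (-e * P ^ (-e - 1))
        + ((θS * (Ψ' ((sstar - g * P + k * Hs P) / σ) * ((-g + k * Hs' P) / σ))) * P⁻¹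
          + (θS * Ψ ((sstar - g * P + k * Hs P) / σ) - δ) * (-(P ^ 2)⁻¹))) P := by
    intro P hP
    rw [Set.mem_Ioi] at hP
    have hx : HasDerivAt (fun P => (sstar - g * P + k * Hs P) / σ)
        ((-g + k * Hs' P) / σ) P := by
      have h1 : HasDerivAt (fun P => sstar - g * P + k * Hs P) (-g + k * Hs' P) P := by
        have := ((hasDerivAt_const P sstar).sub ((hasDerivAt_id P).const_mul g)).add
          ((hHs' P hP).const_mul k)
        convert this using 1 <;> first | rfl | ring
      exact h1.div_const σ
    have hΨx : HasDerivAt (fun P => Ψ ((sstar - g * P + k * Hs P) / σ))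
        (Ψ' ((sstar - g * P + k * Hs P) / σ) * ((-g + k * Hs' P) / σ)) P :=
      (hΨd _).comp P hx
    have hpe : HasDerivAt (fun P : ℝ => P ^ (-e)) (-e * P ^ (-e - 1)) P := by
      have := Real.hasDerivAt_rpow_const (p := -e) (Or.inl hP.ne')
      simpa [mul_comm] using this
    have hinv : HasDerivAt (fun P : ℝ => P⁻¹) (-(P ^ 2)⁻¹) P := hasDerivAt_inv hP.ne'
    exact ((hΨx.const_mul θU).mul hpe).add (((hΨx.const_mul θS).sub_const δ).mul hinv)
  have hneg : ∀ P : ℝ, P ∈ Set.Ioi (0:ℝ) →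
      ((θU * (Ψ' ((sstar - g * P + k * Hs P) / σ) * ((-g + k * Hs' P) / σ))) * P ^ (-e)
        + (θU * Ψ ((sstar - g * P + k * Hs P) / σ)) * (-e * P ^ (-e - 1))
        + ((θS * (Ψ' ((sstar - g * P + k * Hs P) / σ) * ((-g + k * Hs' P) / σ))) * P⁻¹
          + (θS * Ψ ((sstar - g * P + k * Hs P) / σ) - δ) * (-(P ^ 2)⁻¹))) < 0 := by
    intro P hP
    rw [Set.mem_Ioi] at hP
    have hdomP := hdom P hP
    have h2 : P ^ (-(2:ℝ)) = (P ^ 2)⁻¹ := by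
      rw [← Real.rpow_natCast P 2, ← Real.rpow_neg hP.le]
      norm_num
    rw [h2] at hdomP
    have hid : (θU * (Ψ' ((sstar - g * P + k * Hs P) / σ) * ((-g + k * Hs' P) / σ))) * P ^ (-e)
        + (θU * Ψ ((sstar - g * P + k * Hs P) / σ)) * (-e * P ^ (-e - 1))
        + ((θS * (Ψ' ((sstar - g * P + k * Hs P) / σ) * ((-g + k * Hs' P) / σ))) * P⁻¹
          + (θS * Ψ ((sstar - g * P + k * Hs P) / σ) - δ) * (-(P ^ 2)⁻¹))
      = (θU * P ^ (-e) + θS * P⁻¹) * Ψ' ((sstar - g * P + k * Hs P) / σ) * (k / σ) * Hs' P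
        - (e * θU * Ψ ((sstar - g * P + k * Hs P) / σ) * P ^ (-e - 1)
          + (θS * Ψ ((sstar - g * P + k * Hs P) / σ) - δ) * (P ^ 2)⁻¹
          + (θU * P ^ (-e) + θS * P⁻¹) * Ψ' ((sstar - g * P + k * Hs P) / σ) * (g / σ)) := by
      ring
    rw [hid]
    linarith
  have hanti : StrictAntiOn
      (fun P : ℝ =>
        θU * Ψ ((sstar - g * P + k * Hs P) / σ) * P ^ (-e) +
          (θS * Ψ ((sstar - g * P + k * Hs P) / σ) - δ) * P⁻¹)
      (Set.Ioi 0) := by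
    apply StrictAntiOn.mono (s := Set.Ioi (0:ℝ)) ?_ le_rfl
    apply strictAntiOn_of_deriv_neg (convex_Ioi 0)
    · intro P hP
      exact ((key P hP).differentiableAt).continuousAt.continuousWithinAt
    · intro P hP
      rw [interior_Ioi] at hP
      rw [(key P hP).deriv]
      exact hneg P hP
  refine ⟨hanti, ?_⟩
  -- uniqueness of hash supply
  have hq : StrictMonoOn (fun H : ℝ => H * φ H) (Set.Ioi 0) := by
    intro a ha b hb hab
    rw [Set.mem_Ioi] at ha hb
    have hφb : 0 < φ b := lt_of_le_of_lt hφ0 (hφm (Set.mem_Ici.mpr le_rfl) (Set.mem_Ici.mpr hb.le) hb)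
    have hφab : φ a ≤ φ b := (hφm (Set.mem_Ici.mpr ha.le) (Set.mem_Ici.mpr hb.le) hab).le
    have hφa : 0 ≤ φ a := le_trans hφ0 (hφm (Set.mem_Ici.mpr le_rfl) (Set.mem_Ici.mpr ha.le) ha).le
    calc a * φ a ≤ a * φ b := by nlinarith
      _ < b * φ b := by nlinarith
  intro Q hQ P₁ H₁ P₂ H₂ ⟨hP₁, hH₁, heq₁, hD₁⟩ ⟨hP₂, hH₂, heq₂, hD₂⟩
  have hHeq : ∀ P H : ℝ, 0 < P → 0 < H → H * φ H = P * (B + Φ) → H = Hs P := by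
    intro P H hP hH heq
    have ⟨hHsP, hHsEq⟩ := hHs P hP
    by_contra hne
    rcases lt_or_gt_of_ne hne with h | h
    · exact absurd (heq.trans hHsEq.symm) (ne_of_lt (hq (Set.mem_Ioi.mpr hH) (Set.mem_Ioi.mpr hHsP) h))
    · exact absurd (hHsEq.trans heq.symm) (ne_of_lt (hq (Set.mem_Ioi.mpr hHsP) (Set.mem_Ioi.mpr hH) h))
  have h1 : H₁ = Hs P₁ := hHeq P₁ H₁ hP₁ hH₁ heq₁
  have h2 : H₂ = Hs P₂ := hHeq P₂ H₂ hP₂ hH₂ heq₂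
  rw [h1] at hD₁
  rw [h2] at hD₂
  have hPeq : P₁ = P₂ := hanti.injOn (Set.mem_Ioi.mpr hP₁) (Set.mem_Ioi.mpr hP₂)
    (by rw [hD₁, hD₂])
  exact ⟨hPeq, by rw [h1, h2, hPeq]⟩
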